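/- Let σ, b, r be positive reals with σr + (σ−b)(b−1) > 0, r − 1 > 0, r − 1 ≥ (b(b+σ−1)² − 4σ(b+σb−b²))/(3σ²), and suppose either (a) σ²(r−1)(b−4) ≤ 4σ(σb+b−b²) − b(b+σ−1)², or (b) P := b(b+σ−1)² − 4σ(σb+b−b²) + σ²(r−1)(b−4) > 0 and the quadratic equation (2σ−b+γ)²·P + 4bγ(σ+1)·Q = 0, where Q := b(b+σ−1)² − 4σ(σb+b−b²) − 3σ²(r−1), has two distinct real roots whose larger root is positive. Set ρ² = σ²/(σr + (σ−b)(b−1)). Then there exist real numbers γ₁ ≥ 0, γ₂, γ₃, γ₄ such that: 2γ₃ > 2σγ₁ − σγ₁γ₂ + ρ²/4; 2γ₃ ≥ ρ²/(4b) + (γ₁/(4b))(γ₂ + 2σ + b)²; and 2(r−1)γ₃ ≤ 2σγ₁(r−1) + γ₁γ₂(r−1) − ρ²(b+σ−1)²/(4σ²) + σ/b. -/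

import Mathlib

set_option maxHeartbeats 1600000


theorem stmt_15 (σ b r : ℝ) (hσ : 0 < σ) (hb : 0 < b) (hr : 0 < r)
    (hpos : σ * r + (σ - b) * (b - 1) > 0)
    (h1 : r - 1 > 0)
    (h2 : r - 1 ≥ (b * (b + σ - 1)^2 - 4 * σ * (b + σ * b - b^2)) / (3 * σ^2))
    (hab :
      (σ^2 * (r - 1) * (b - 4) ≤ 4 * σ * (σ * b + b - b^2) - b * (b + σ - 1)^2) ∨
      (0 < b * (b + σ - 1)^2 - 4 * σ * (σ * b + b - b^2) + σ^2 * (r - 1) * (b - 4) ∧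
        ∃ γI γII : ℝ, γI < γII ∧ 0 < γII ∧
          (2 * σ - b + γI)^2 *
              (b * (b + σ - 1)^2 - 4 * σ * (σ * b + b - b^2) + σ^2 * (r - 1) * (b - 4)) +
            4 * b * γI * (σ + 1) *
              (b * (b + σ - 1)^2 - 4 * σ * (σ * b + b - b^2) - 3 * σ^2 * (r - 1)) = 0 ∧
          (2 * σ - b + γII)^2 *
              (b * (b + σ - 1)^2 - 4 * σ * (σ * b + b - b^2) + σ^2 * (r - 1) * (b - 4)) +
            4 * b * γII * (σ + 1) *
              (b * (b + σ - 1)^2 - 4 * σ * (σ * b + b - b^2) - 3 * σ^2 * (r - 1)) = 0))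
    (ρsq : ℝ) (hρ : ρsq = σ^2 / (σ * r + (σ - b) * (b - 1))) :
    ∃ γ₁ γ₂ γ₃ γ₄ : ℝ, γ₁ ≥ 0 ∧
      2 * γ₃ > 2 * σ * γ₁ - σ * γ₁ * γ₂ + ρsq / 4 ∧
      2 * γ₃ ≥ ρsq / (4 * b) + (γ₁ / (4 * b)) * (γ₂ + 2 * σ + b)^2 ∧
      2 * (r - 1) * γ₃ ≤ 2 * σ * γ₁ * (r - 1) + γ₁ * γ₂ * (r - 1)
          - ρsq * (b + σ - 1)^2 / (4 * σ^2) + σ / b := by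
  have hDpos : (0:ℝ) < σ * r + (σ - b) * (b - 1) := hpos
  have hbne : b ≠ 0 := ne_of_gt hb
  have hσne : σ ≠ 0 := ne_of_gt hσ
  have hr1ne : r - 1 ≠ 0 := ne_of_gt h1
  have hDne : σ * r + (σ - b) * (b - 1) ≠ 0 := ne_of_gt hDpos
  have hden : (0:ℝ) < 4 * b * (σ * r + (σ - b) * (b - 1)) * (r - 1) :=
    mul_pos (mul_pos (by linarith : (0:ℝ) < 4 * b) hDpos) h1
  obtain ⟨P, hPdef⟩ : ∃ x : ℝ,
      x = b * (b + σ - 1)^2 - 4 * σ * (σ * b + b - b^2) + σ^2 * (r - 1) * (b - 4) := ⟨_, rfl⟩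
  obtain ⟨Q, hQdef⟩ : ∃ x : ℝ,
      x = b * (b + σ - 1)^2 - 4 * σ * (σ * b + b - b^2) - 3 * σ^2 * (r - 1) := ⟨_, rfl⟩
  rw [← hPdef, ← hQdef] at hab
  have h3 : b * (b + σ - 1)^2 - 4 * σ * (b + σ * b - b^2) ≤ (r - 1) * (3 * σ^2) :=
    (div_le_iff₀ (by positivity : (0:ℝ) < 3 * σ^2)).mp h2
  have hQ2 : Q ≤ 0 := by nlinarith [h3, hQdef]
  have hPQ : P - Q = σ^2 * (r - 1) * (b - 1) := by rw [hPdef, hQdef]; ring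
  suffices key : ∃ γ₁ γ₂ : ℝ, 0 ≤ γ₁ ∧
      P < 4 * b * (σ * r + (σ - b) * (b - 1)) * (r - 1) * ((σ + 1) * (γ₁ * γ₂)) ∧
      γ₁ * (γ₂ + 2 * σ - b)^2 * ((σ * r + (σ - b) * (b - 1)) * (r - 1)) ≤ -Q by
    obtain ⟨γ₁, γ₂, hγ₁, hi, hii⟩ := key
    refine ⟨γ₁, γ₂,
      (γ₁ * (2 * σ + γ₂) + (σ / b - ρsq * (b + σ - 1)^2 / (4 * σ^2)) / (r - 1)) / 2, 0,
      hγ₁, ?_, ?_, ?_⟩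
    · have e1 : 2 * ((γ₁ * (2 * σ + γ₂) + (σ / b - ρsq * (b + σ - 1)^2 / (4 * σ^2)) / (r - 1)) / 2)
          - (2 * σ * γ₁ - σ * γ₁ * γ₂ + ρsq / 4)
          = (4 * b * (σ * r + (σ - b) * (b - 1)) * (r - 1) * ((σ + 1) * (γ₁ * γ₂)) - P)
              / (4 * b * (σ * r + (σ - b) * (b - 1)) * (r - 1)) := by
        rw [hPdef, hρ]; field_simp; ring
      have hp : 0 < (4 * b * (σ * r + (σ - b) * (b - 1)) * (r - 1) * ((σ + 1) * (γ₁ * γ₂)) - P)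
          / (4 * b * (σ * r + (σ - b) * (b - 1)) * (r - 1)) :=
        div_pos (by linarith) hden
      linarith
    · have e2 : 2 * ((γ₁ * (2 * σ + γ₂) + (σ / b - ρsq * (b + σ - 1)^2 / (4 * σ^2)) / (r - 1)) / 2)
          - (ρsq / (4 * b) + (γ₁ / (4 * b)) * (γ₂ + 2 * σ + b)^2)
          = (-Q - γ₁ * (γ₂ + 2 * σ - b)^2 * ((σ * r + (σ - b) * (b - 1)) * (r - 1)))
              / (4 * b * (σ * r + (σ - b) * (b - 1)) * (r - 1)) := by
        rw [hQdef, hρ]; field_simp; ring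
      have hp : 0 ≤ (-Q - γ₁ * (γ₂ + 2 * σ - b)^2 * ((σ * r + (σ - b) * (b - 1)) * (r - 1)))
          / (4 * b * (σ * r + (σ - b) * (b - 1)) * (r - 1)) :=
        div_nonneg (by linarith) hden.le
      linarith
    · have e3 : 2 * (r - 1) *
          ((γ₁ * (2 * σ + γ₂) + (σ / b - ρsq * (b + σ - 1)^2 / (4 * σ^2)) / (r - 1)) / 2)
          = 2 * σ * γ₁ * (r - 1) + γ₁ * γ₂ * (r - 1)
              - ρsq * (b + σ - 1)^2 / (4 * σ^2) + σ / b := by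
        rw [hρ]; field_simp; ring
      linarith
  -- now construct γ₁, γ₂
  rcases hab with hA | ⟨hP, γI, γII, hlt, hIIpos, hI, hII⟩
  · -- case (a): P ≤ 0
    have hPle : P ≤ 0 := by rw [hPdef]; linarith
    rcases lt_or_eq_of_le hPle with hPneg | hPzero
    · -- P < 0 : take γ₁ = γ₂ = 0
      refine ⟨0, 0, le_refl 0, ?_, ?_⟩
      · simp only [mul_zero, zero_mul]; linarith
      · simp only [mul_zero, zero_mul]; linarith
    · -- P = 0 : then Q < 0
      have hQneg : Q < 0 := by
        rcases lt_or_eq_of_le hQ2 with h | h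
        · exact h
        · exfalso
          have hz : σ^2 * (r - 1) * (b - 1) = 0 := by linarith [hPQ]
          have hb1 : b = 1 := by
            rcases mul_eq_zero.mp hz with h5 | h5
            · exact absurd h5 (by positivity)
            · linarith
          rw [hQdef, hb1] at h
          nlinarith
      rcases eq_or_ne (3 + 2 * σ - b) 0 with h0 | h0
      · refine ⟨1, 3, zero_le_one, ?_, ?_⟩
        · nlinarith [hden, hσ]
        · rw [h0]; simpa using hQneg.le
      · have hsq : 0 < (3 + 2 * σ - b)^2 :=
          lt_of_le_of_ne (sq_nonneg _) (Ne.symm (pow_ne_zero 2 h0))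
        have hdd : 0 < (3 + 2 * σ - b)^2 * ((σ * r + (σ - b) * (b - 1)) * (r - 1)) :=
          mul_pos hsq (mul_pos hDpos h1)
        have hg : 0 < (-Q) / ((3 + 2 * σ - b)^2 * ((σ * r + (σ - b) * (b - 1)) * (r - 1))) :=
          div_pos (by linarith) hdd
        refine ⟨(-Q) / ((3 + 2 * σ - b)^2 * ((σ * r + (σ - b) * (b - 1)) * (r - 1))), 3,
          hg.le, ?_, ?_⟩
        · have h5 : 0 < (σ + 1) *
              ((-Q) / ((3 + 2 * σ - b)^2 * ((σ * r + (σ - b) * (b - 1)) * (r - 1))) * 3) :=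
            mul_pos (by linarith) (mul_pos hg (by norm_num))
          have h6 := mul_pos hden h5
          linarith
        · have e : (-Q) / ((3 + 2 * σ - b)^2 * ((σ * r + (σ - b) * (b - 1)) * (r - 1)))
              * (3 + 2 * σ - b)^2 * ((σ * r + (σ - b) * (b - 1)) * (r - 1)) = -Q := by
            rw [div_mul_eq_mul_div, div_mul_eq_mul_div, div_eq_iff (ne_of_gt hdd)]; ring
          exact le_of_eq e
  · -- case (b)
    have hQneg : Q < 0 := by
      rcases lt_or_eq_of_le hQ2 with h | h
      · exact h
      · exfalso
        have hzI : (2 * σ - b + γI)^2 * P = 0 := by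
          linear_combination hI - 4 * b * γI * (σ + 1) * h
        have hzII : (2 * σ - b + γII)^2 * P = 0 := by
          linear_combination hII - 4 * b * γII * (σ + 1) * h
        have eI : 2 * σ - b + γI = 0 := by
          rcases mul_eq_zero.mp hzI with h5 | h5
          · exact pow_eq_zero_iff (n := 2) (by norm_num) |>.mp h5
          · exact absurd h5 (ne_of_gt hP)
        have eII : 2 * σ - b + γII = 0 := by
          rcases mul_eq_zero.mp hzII with h5 | h5
          · exact pow_eq_zero_iff (n := 2) (by norm_num) |>.mp h5
          · exact absurd h5 (ne_of_gt hP)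
        linarith
    obtain ⟨γ₂, hγ₂def⟩ : ∃ x : ℝ, x = (max γI 0 + γII) / 2 := ⟨_, rfl⟩
    have hg2I : γI < γ₂ := by
      have h4 : γI ≤ max γI 0 := le_max_left _ _
      rw [hγ₂def]; linarith
    have hg2II : γ₂ < γII := by
      have h4 : max γI 0 < γII := max_lt hlt hIIpos
      rw [hγ₂def]; linarith
    have hg2pos : 0 < γ₂ := by
      have h4 : (0:ℝ) ≤ max γI 0 := le_max_right _ _
      rw [hγ₂def]; linarith
    have keyid : ((2 * σ - b + γ₂)^2 * P + 4 * b * γ₂ * (σ + 1) * Q) * (γII - γI)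
        = P * (γ₂ - γI) * (γ₂ - γII) * (γII - γI) := by
      linear_combination (γII - γ₂) * hI + (γ₂ - γI) * hII
    have fneg : (2 * σ - b + γ₂)^2 * P + 4 * b * γ₂ * (σ + 1) * Q < 0 := by
      have h4 : P * (γ₂ - γI) * (γ₂ - γII) * (γII - γI) < 0 := by
        have h5 := mul_pos (mul_pos (mul_pos hP (by linarith : (0:ℝ) < γ₂ - γI))
          (by linarith : (0:ℝ) < γII - γ₂)) (by linarith : (0:ℝ) < γII - γI)
        nlinarith
      nlinarith [keyid, sub_pos.mpr hlt]
    rcases eq_or_ne (γ₂ + 2 * σ - b) 0 with h0 | h0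
    · -- degenerate: second condition trivial, choose γ₁ big enough
      have hdd2 : 0 < 4 * b * (σ * r + (σ - b) * (b - 1)) * (r - 1) * ((σ + 1) * γ₂) :=
        mul_pos hden (mul_pos (by linarith) hg2pos)
      have hg : 0 < (P + 1) / (4 * b * (σ * r + (σ - b) * (b - 1)) * (r - 1) * ((σ + 1) * γ₂)) :=
        div_pos (by linarith) hdd2
      refine ⟨(P + 1) / (4 * b * (σ * r + (σ - b) * (b - 1)) * (r - 1) * ((σ + 1) * γ₂)), γ₂,
        hg.le, ?_, ?_⟩
      · have e : 4 * b * (σ * r + (σ - b) * (b - 1)) * (r - 1) * ((σ + 1) *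
            ((P + 1) / (4 * b * (σ * r + (σ - b) * (b - 1)) * (r - 1) * ((σ + 1) * γ₂)) * γ₂))
            = P + 1 := by
          field_simp
        rw [e]; linarith
      · rw [h0]
        have e : ((P + 1) / (4 * b * (σ * r + (σ - b) * (b - 1)) * (r - 1) * ((σ + 1) * γ₂)))
            * (0:ℝ)^2 * ((σ * r + (σ - b) * (b - 1)) * (r - 1)) = 0 := by ring
        rw [e]; linarith
    · have hsq : 0 < (γ₂ + 2 * σ - b)^2 :=
        lt_of_le_of_ne (sq_nonneg _) (Ne.symm (pow_ne_zero 2 h0))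
      have hdd : 0 < (γ₂ + 2 * σ - b)^2 * ((σ * r + (σ - b) * (b - 1)) * (r - 1)) :=
        mul_pos hsq (mul_pos hDpos h1)
      have hg : 0 < (-Q) / ((γ₂ + 2 * σ - b)^2 * ((σ * r + (σ - b) * (b - 1)) * (r - 1))) :=
        div_pos (by linarith) hdd
      refine ⟨(-Q) / ((γ₂ + 2 * σ - b)^2 * ((σ * r + (σ - b) * (b - 1)) * (r - 1))), γ₂,
        hg.le, ?_, ?_⟩
      · have e : 4 * b * (σ * r + (σ - b) * (b - 1)) * (r - 1) * ((σ + 1) *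
            ((-Q) / ((γ₂ + 2 * σ - b)^2 * ((σ * r + (σ - b) * (b - 1)) * (r - 1))) * γ₂))
            = 4 * b * (σ + 1) * γ₂ * (-Q) / ((γ₂ + 2 * σ - b)^2) := by
          rw [div_mul_eq_mul_div, mul_div_assoc', mul_div_assoc',
            div_eq_div_iff (ne_of_gt hdd) (ne_of_gt hsq)]
          ring
        rw [e, lt_div_iff₀ hsq]
        nlinarith [fneg]
      · have e : (-Q) / ((γ₂ + 2 * σ - b)^2 * ((σ * r + (σ - b) * (b - 1)) * (r - 1)))
            * (γ₂ + 2 * σ - b)^2 * ((σ * r + (σ - b) * (b - 1)) * (r - 1)) = -Q := by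
          rw [div_mul_eq_mul_div, div_mul_eq_mul_div, div_eq_iff (ne_of_gt hdd)]; ring
        exact le_of_eq e
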